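/- Consider generalized interpolation data with N = M, x₀ = y₀ = 0 and x_N = y_N = 1/2, and let T_max = max{ |t_{i,j} − t_{k,l}| : 0 ≤ i,j,k,l ≤ N }. Then for every 1 ≤ n, m ≤ N and all (x,y), (x̄,ȳ) ∈ [0,1/2] × [0,1/2]: |q_{n,m}(x,y) − q_{n,m}(x̄,ȳ)| ≤ 8 · (1+γ) · T_max · (|x − x̄| + |y − ȳ|), where γ = max_{n,m}|γ_{n,m}|. -/

import Mathlib

open Real Set

noncomputable section

/-- `z_eva` (resp. `t_eva`) from the paper: `z N M - z N 0 - z 0 M + z 0 0`. -/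
def eva (N M : ℕ) (z : ℕ → ℕ → ℝ) : ℝ := z N M - z N 0 - z 0 M + z 0 0

/-- The coefficient `g_{n,m}` determined by the join-up conditions. -/
def gCoef (N M : ℕ) (x y : ℕ → ℝ) (z t : ℕ → ℕ → ℝ) (a b : ℕ → ℕ → ℝ) (n m : ℕ) : ℝ :=
  (z (n-1) (m-1) - z (n-1) m - z n (m-1) + z n m
    - a n m * eva N M z - b n m * eva N M t) / ((x 0 - x N) * (y 0 - y M))

/-- The coefficient `e_{n,m}`. -/
def eCoef (N M : ℕ) (x y : ℕ → ℝ) (z t : ℕ → ℕ → ℝ) (a b : ℕ → ℕ → ℝ) (n m : ℕ) : ℝ :=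
  (z (n-1) (m-1) - z n (m-1) - a n m * (z 0 0 - z N 0) - b n m * (t 0 0 - t N 0)
    - gCoef N M x y z t a b n m * (x 0 - x N) * y 0) / (x 0 - x N)

/-- The coefficient `f_{n,m}`. -/
def fCoef (N M : ℕ) (x y : ℕ → ℝ) (z t : ℕ → ℕ → ℝ) (a b : ℕ → ℕ → ℝ) (n m : ℕ) : ℝ :=
  (z (n-1) (m-1) - z (n-1) m - a n m * (z 0 0 - z 0 M) - b n m * (t 0 0 - t 0 M)
    - gCoef N M x y z t a b n m * (y 0 - y M) * x 0) / (y 0 - y M)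

/-- The coefficient `k_{n,m}`. -/
def kCoef (N M : ℕ) (x y : ℕ → ℝ) (z t : ℕ → ℕ → ℝ) (a b : ℕ → ℕ → ℝ) (n m : ℕ) : ℝ :=
  z n m - eCoef N M x y z t a b n m * x N - fCoef N M x y z t a b n m * y M
    - a n m * z N M - b n m * t N M - gCoef N M x y z t a b n m * x N * y M

/-- `p_{n,m}(X,Y) = e_{n,m} X + f_{n,m} Y + g_{n,m} X Y + k_{n,m}`. -/
def pMap (N M : ℕ) (x y : ℕ → ℝ) (z t : ℕ → ℕ → ℝ) (a b : ℕ → ℕ → ℝ) (n m : ℕ)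
    (X Y : ℝ) : ℝ :=
  eCoef N M x y z t a b n m * X + fCoef N M x y z t a b n m * Y
    + gCoef N M x y z t a b n m * X * Y + kCoef N M x y z t a b n m

/-- `q_{n,m}(X,Y) = ẽ_{n,m} X + f̃_{n,m} Y + g̃_{n,m} X Y + k̃_{n,m}`; it is `p` built from the
data `t` with parameters `γ` and `0`. -/
def qMap (N M : ℕ) (x y : ℕ → ℝ) (t : ℕ → ℕ → ℝ) (c : ℕ → ℕ → ℝ) (n m : ℕ) (X Y : ℝ) : ℝ :=
  pMap N M x y t t c (fun _ _ => 0) n m X Y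

/-- `φ_n` (resp. `ψ_m`): the affine map of `[x₀, x_N]` onto `[x_{n-1}, x_n]`. -/
def phiMap (N : ℕ) (x : ℕ → ℝ) (n : ℕ) (X : ℝ) : ℝ :=
  x (n-1) + (x n - x (n-1)) * (X - x 0) / (x N - x 0)

/-- Validity of generalized interpolation data: `N, M ≥ 1`, strictly increasing knots,
`|α_{n,m}| < 1` and `|β_{n,m}| + |γ_{n,m}| < 1`. -/
structure DataOK (N M : ℕ) (x y : ℕ → ℝ) (a b c : ℕ → ℕ → ℝ) : Prop where
  hN : 1 ≤ N
  hM : 1 ≤ M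
  hx : ∀ i < N, x i < x (i+1)
  hy : ∀ j < M, y j < y (j+1)
  ha : ∀ n m, 1 ≤ n → n ≤ N → 1 ≤ m → m ≤ M → |a n m| < 1
  hbc : ∀ n m, 1 ≤ n → n ≤ N → 1 ≤ m → m ≤ M → |b n m| + |c n m| < 1

/-- `(F₁, F₂)` is the CHFIS pair for the generalized interpolation data. -/
def IsCHFIS (N M : ℕ) (x y : ℕ → ℝ) (z t : ℕ → ℕ → ℝ) (a b c : ℕ → ℕ → ℝ)
    (F₁ F₂ : ℝ → ℝ → ℝ) : Prop :=
  ContinuousOn (fun P : ℝ × ℝ => F₁ P.1 P.2) (Icc (x 0) (x N) ×ˢ Icc (y 0) (y M)) ∧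
  ContinuousOn (fun P : ℝ × ℝ => F₂ P.1 P.2) (Icc (x 0) (x N) ×ˢ Icc (y 0) (y M)) ∧
  (∀ i ≤ N, ∀ j ≤ M, F₁ (x i) (y j) = z i j ∧ F₂ (x i) (y j) = t i j) ∧
  ∀ n m, 1 ≤ n → n ≤ N → 1 ≤ m → m ≤ M →
    ∀ X ∈ Icc (x 0) (x N), ∀ Y ∈ Icc (y 0) (y M),
      F₁ (phiMap N x n X) (phiMap M y m Y)
        = a n m * F₁ X Y + b n m * F₂ X Y + pMap N M x y z t a b n m X Y ∧
      F₂ (phiMap N x n X) (phiMap M y m Y)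
        = c n m * F₂ X Y + qMap N M x y t c n m X Y

/-- The invariance-of-ratio condition between the knots `x, y` and the knots `xs, ys`. -/
def RatioInv (N M : ℕ) (x y xs ys : ℕ → ℝ) : Prop :=
  (∀ n, 1 ≤ n → n ≤ N → (x 0 - x N) / (xs 0 - xs N) = (x (n-1) - x n) / (xs (n-1) - xs n)) ∧
  (∀ m, 1 ≤ m → m ≤ M → (y 0 - y M) / (ys 0 - ys M) = (y (m-1) - y m) / (ys (m-1) - ys m))

/-- `T : [x₀, x_N] → [xs₀, xs_N]` is the cell-wise affine transfer map, sending
`[x_{n-1}, x_n]` affinely onto `[xs_{n-1}, xs_n]` (one coordinate of `R` resp. `K`). -/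
def IsTransfer (N : ℕ) (x xs : ℕ → ℝ) (T : ℝ → ℝ) : Prop :=
  ∀ n, 1 ≤ n → n ≤ N → ∀ X ∈ Icc (x (n-1)) (x n),
    T X = xs (n-1) + (xs n - xs (n-1)) * (X - x (n-1)) / (x n - x (n-1))

/-- `max { |a n m| : 1 ≤ n ≤ N, 1 ≤ m ≤ M }` (as an `sSup`). -/
def supParam (N M : ℕ) (a : ℕ → ℕ → ℝ) : ℝ :=
  sSup {v : ℝ | ∃ n m, 1 ≤ n ∧ n ≤ N ∧ 1 ≤ m ∧ m ≤ M ∧ v = |a n m|}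

/-- `max { (|x_n - xs_n| + |y_m - ys_m|)^δ : 0 ≤ n ≤ N, 0 ≤ m ≤ M }` (as an `sSup`). -/
def supKnotDiff (N M : ℕ) (x xs y ys : ℕ → ℝ) (d : ℝ) : ℝ :=
  sSup {v : ℝ | ∃ n m, n ≤ N ∧ m ≤ M ∧ v = (|x n - xs n| + |y m - ys m|) ^ d}

/-- `max { |z_{n,m} - zs_{n,m}| : 0 ≤ n ≤ N, 0 ≤ m ≤ M }` (as an `sSup`). -/
def supValDiff (N M : ℕ) (z zs : ℕ → ℕ → ℝ) : ℝ :=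
  sSup {v : ℝ | ∃ n m, n ≤ N ∧ m ≤ M ∧ v = |z n m - zs n m|}

/-- `max { |z_{i,j} - z_{k,l}| : 0 ≤ i,j,k,l ≤ N }` (as an `sSup`). -/
def supPairDiff (N : ℕ) (z : ℕ → ℕ → ℝ) : ℝ :=
  sSup {v : ℝ | ∃ i j k l, i ≤ N ∧ j ≤ N ∧ k ≤ N ∧ l ≤ N ∧ v = |z i j - z k l|}

lemma abs_sub_le_abs_add_abs' (u v : ℝ) : |u - v| ≤ |u| + |v| := by
  rw [sub_eq_add_neg]
  exact (abs_add_le _ _).trans (by rw [abs_neg])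

set_option maxHeartbeats 1000000 in
/-- the Lipschitz bound for `q_{n,m}` on `[0,1/2] × [0,1/2]`. -/
theorem qMap_lipschitz (N : ℕ) (x y : ℕ → ℝ) (z t : ℕ → ℕ → ℝ) (a b c : ℕ → ℕ → ℝ)
    (hD : DataOK N N x y a b c)
    (hx0 : x 0 = 0) (hy0 : y 0 = 0) (hxN : x N = 1/2) (hyN : y N = 1/2) :
    ∀ n m, 1 ≤ n → n ≤ N → 1 ≤ m → m ≤ N →
      ∀ X ∈ Icc (0:ℝ) (1/2), ∀ Y ∈ Icc (0:ℝ) (1/2),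
        ∀ X' ∈ Icc (0:ℝ) (1/2), ∀ Y' ∈ Icc (0:ℝ) (1/2),
          |qMap N N x y t c n m X Y - qMap N N x y t c n m X' Y'| ≤
            8 * (1 + supParam N N c) * supPairDiff N t * (|X - X'| + |Y - Y'|) := by
  intro n m hn1 hnN hm1 hmN X hX Y hY X' hX' Y' hY'
  set T := supPairDiff N t with hTdef
  set γ := supParam N N c with hγdef
  -- boundedness of the sup defining T
  have hTbdd : BddAbove {v : ℝ | ∃ i j k l, i ≤ N ∧ j ≤ N ∧ k ≤ N ∧ l ≤ N ∧
      v = |t i j - t k l|} := by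
    apply Set.Finite.bddAbove
    apply Set.Finite.subset
      ((((Set.finite_Iic N).prod (Set.finite_Iic N)).prod
        ((Set.finite_Iic N).prod (Set.finite_Iic N))).image
        (fun p : (ℕ × ℕ) × (ℕ × ℕ) => |t p.1.1 p.1.2 - t p.2.1 p.2.2|))
    rintro v ⟨i, j, k, l, hi, hj, hk, hl, rfl⟩
    exact ⟨((i, j), (k, l)), ⟨⟨hi, hj⟩, ⟨hk, hl⟩⟩, rfl⟩
  have hT : ∀ i j k l, i ≤ N → j ≤ N → k ≤ N → l ≤ N → |t i j - t k l| ≤ T :=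
    fun i j k l hi hj hk hl => le_csSup hTbdd ⟨i, j, k, l, hi, hj, hk, hl, rfl⟩
  have hT0 : 0 ≤ T :=
    le_trans (abs_nonneg _) (hT 0 0 0 0 (Nat.zero_le _) (Nat.zero_le _) (Nat.zero_le _)
      (Nat.zero_le _))
  -- boundedness of the sup defining γ
  have hγbdd : BddAbove {v : ℝ | ∃ n m, 1 ≤ n ∧ n ≤ N ∧ 1 ≤ m ∧ m ≤ N ∧ v = |c n m|} := by
    refine ⟨1, ?_⟩
    rintro v ⟨n, m, h1, h2, h3, h4, rfl⟩
    exact le_of_lt (lt_of_le_of_lt (le_add_of_nonneg_left (abs_nonneg _)) (hD.hbc n m h1 h2 h3 h4))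
  have hγ : |c n m| ≤ γ := le_csSup hγbdd ⟨n, m, hn1, hnN, hm1, hmN, rfl⟩
  have hγ0 : 0 ≤ γ := le_trans (abs_nonneg _) hγ
  have hn1' : n - 1 ≤ N := le_trans (Nat.sub_le n 1) hnN
  have hm1' : m - 1 ≤ N := le_trans (Nat.sub_le m 1) hmN
  -- bound on eva
  have heva : |eva N N t| ≤ 2 * T := by
    have h1 := hT N N N 0 le_rfl le_rfl le_rfl (Nat.zero_le _)
    have h2 := hT 0 N 0 0 (Nat.zero_le _) le_rfl (Nat.zero_le _) (Nat.zero_le _)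
    have heq : eva N N t = (t N N - t N 0) - (t 0 N - t 0 0) := by unfold eva; ring
    rw [heq]
    exact le_trans (abs_sub_le_abs_add_abs' _ _) (by linarith)
  set G := gCoef N N x y t t c (fun _ _ => 0) n m with hGdef
  set E := eCoef N N x y t t c (fun _ _ => 0) n m with hEdef
  set F := fCoef N N x y t t c (fun _ _ => 0) n m with hFdef
  -- bound on G
  have hG : |G| ≤ 8 * (1 + γ) * T := by
    have hGeq : G = ((t (n-1) (m-1) - t (n-1) m) - (t n (m-1) - t n m)
        - c n m * eva N N t) * 4 := by
      rw [hGdef]; unfold gCoef; rw [hx0, hy0, hxN, hyN]; ring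
    have h1 := hT (n-1) (m-1) (n-1) m hn1' hm1' hn1' hmN
    have h2 := hT n (m-1) n m hnN hm1' hnN hmN
    have h3 : |c n m * eva N N t| ≤ γ * (2 * T) := by
      rw [abs_mul]
      exact mul_le_mul hγ heva (abs_nonneg _) hγ0
    have h4 : |(t (n-1) (m-1) - t (n-1) m) - (t n (m-1) - t n m) - c n m * eva N N t|
        ≤ (|t (n-1) (m-1) - t (n-1) m| + |t n (m-1) - t n m|) + |c n m * eva N N t| :=
      le_trans (abs_sub_le_abs_add_abs' _ _)
        (add_le_add_left (abs_sub_le_abs_add_abs' _ _) _)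
    rw [hGeq, abs_mul]
    have : |(4:ℝ)| = 4 := by norm_num
    rw [this]
    linarith
  -- bound on E
  have hE : |E| ≤ 2 * (1 + γ) * T := by
    have hEeq : E = ((t (n-1) (m-1) - t n (m-1)) - c n m * (t 0 0 - t N 0)) * (-2) := by
      rw [hEdef]; unfold eCoef; rw [hx0, hy0, hxN]; ring
    have h1 := hT (n-1) (m-1) n (m-1) hn1' hm1' hnN hm1'
    have h2 : |c n m * (t 0 0 - t N 0)| ≤ γ * T := by
      rw [abs_mul]
      exact mul_le_mul hγ (hT 0 0 N 0 (Nat.zero_le _) (Nat.zero_le _) le_rfl (Nat.zero_le _))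
        (abs_nonneg _) hγ0
    have h4 := abs_sub_le_abs_add_abs' (t (n-1) (m-1) - t n (m-1)) (c n m * (t 0 0 - t N 0))
    rw [hEeq, abs_mul]
    have : |(-2:ℝ)| = 2 := by norm_num
    rw [this]
    linarith
  -- bound on F
  have hF : |F| ≤ 2 * (1 + γ) * T := by
    have hFeq : F = ((t (n-1) (m-1) - t (n-1) m) - c n m * (t 0 0 - t 0 N)) * (-2) := by
      rw [hFdef]; unfold fCoef; rw [hx0, hy0, hyN]; ring
    have h1 := hT (n-1) (m-1) (n-1) m hn1' hm1' hn1' hmN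
    have h2 : |c n m * (t 0 0 - t 0 N)| ≤ γ * T := by
      rw [abs_mul]
      exact mul_le_mul hγ (hT 0 0 0 N (Nat.zero_le _) (Nat.zero_le _) (Nat.zero_le _) le_rfl)
        (abs_nonneg _) hγ0
    have h4 := abs_sub_le_abs_add_abs' (t (n-1) (m-1) - t (n-1) m) (c n m * (t 0 0 - t 0 N))
    rw [hFeq, abs_mul]
    have : |(-2:ℝ)| = 2 := by norm_num
    rw [this]
    linarith
  -- decompose the difference
  have hq : qMap N N x y t c n m X Y - qMap N N x y t c n m X' Y'
      = (E + G * Y) * (X - X') + (F + G * X') * (Y - Y') := by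
    unfold qMap pMap
    rw [← hGdef, ← hEdef, ← hFdef]; ring
  have hYb : |Y| ≤ 1/2 := abs_le.2 ⟨by linarith [hY.1], hY.2⟩
  have hX'b : |X'| ≤ 1/2 := abs_le.2 ⟨by linarith [hX'.1], hX'.2⟩
  have hGT0 : 0 ≤ 8 * (1 + γ) * T := by positivity
  have hEG : |E + G * Y| ≤ 8 * (1 + γ) * T := by
    have h1 : |G * Y| ≤ (8 * (1 + γ) * T) * (1/2) :=
      (abs_mul _ _).le.trans (mul_le_mul hG hYb (abs_nonneg _) hGT0)
    have := (abs_add_le E (G * Y))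
    linarith
  have hFG : |F + G * X'| ≤ 8 * (1 + γ) * T := by
    have h1 : |G * X'| ≤ (8 * (1 + γ) * T) * (1/2) :=
      (abs_mul _ _).le.trans (mul_le_mul hG hX'b (abs_nonneg _) hGT0)
    have := (abs_add_le F (G * X'))
    linarith
  rw [hq]
  calc |(E + G * Y) * (X - X') + (F + G * X') * (Y - Y')|
      ≤ |(E + G * Y) * (X - X')| + |(F + G * X') * (Y - Y')| := abs_add_le _ _
    _ = |E + G * Y| * |X - X'| + |F + G * X'| * |Y - Y'| := by rw [abs_mul, abs_mul]
    _ ≤ (8 * (1 + γ) * T) * |X - X'| + (8 * (1 + γ) * T) * |Y - Y'| :=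
        add_le_add (mul_le_mul_of_nonneg_right hEG (abs_nonneg _))
          (mul_le_mul_of_nonneg_right hFG (abs_nonneg _))
    _ = 8 * (1 + γ) * T * (|X - X'| + |Y - Y'|) := by ring

end
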